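/- The matrix exponential of the spin matrix of a vector φ ∈ ℝ³ equals the Rodrigues formula: exp(S(φ)) = I + (sin φ̄/φ̄) S(φ) + ((1 − cos φ̄)/φ̄²) S(φ)², where φ̄ = ‖φ‖ ≠ 0. -/

import Mathlib

open Matrix Real

noncomputable def spin (a : Fin 3 → ℝ) : Matrix (Fin 3) (Fin 3) ℝ :=
  !![0, -a 2, a 1; a 2, 0, -a 0; -a 1, a 0, 0]

noncomputable def enorm3 (a : Fin 3 → ℝ) : ℝ :=
  Real.sqrt (a 0 ^ 2 + a 1 ^ 2 + a 2 ^ 2)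

noncomputable def rod (φ : Fin 3 → ℝ) : Matrix (Fin 3) (Fin 3) ℝ :=
  1 + (Real.sin (enorm3 φ) / enorm3 φ) • spin φ
    + ((1 - Real.cos (enorm3 φ)) / (enorm3 φ) ^ 2) • (spin φ ^ 2)

theorem stmt5 (φ : Fin 3 → ℝ) (hφ : φ ≠ 0) :
    NormedSpace.exp (spin φ) = rod φ := by
  set t := enorm3 φ with ht
  set S := spin φ with hS
  -- positivity of the norm
  have hsum_pos : 0 < φ 0 ^ 2 + φ 1 ^ 2 + φ 2 ^ 2 := by
    have h0 : φ 0 ≠ 0 ∨ φ 1 ≠ 0 ∨ φ 2 ≠ 0 := by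
      by_contra h
      push_neg at h
      exact hφ (funext fun i => by fin_cases i <;> simp [h.1, h.2.1, h.2.2])
    rcases h0 with h | h | h <;> positivity
  have htpos : 0 < t := by
    rw [ht]; unfold enorm3; exact Real.sqrt_pos.mpr hsum_pos
  have htne : t ≠ 0 := ne_of_gt htpos
  have ht2 : t ^ 2 = φ 0 ^ 2 + φ 1 ^ 2 + φ 2 ^ 2 := by
    rw [ht]; unfold enorm3; exact Real.sq_sqrt hsum_pos.le
  -- the key cubic identity
  have hS3 : S ^ 3 = (-(t ^ 2)) • S := by
    rw [ht2, hS]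
    ext i j
    fin_cases i <;> fin_cases j <;>
      simp [spin, pow_succ, Matrix.mul_apply, Fin.sum_univ_three, Matrix.smul_apply] <;> ring
  have h3 : S * S ^ 2 = (-(t ^ 2)) • S := by
    rw [← pow_succ']; exact hS3
  have hodd_pow : ∀ k : ℕ, S ^ (2 * k + 1) = ((-(t ^ 2)) ^ k) • S := by
    intro k
    induction k with
    | zero => simp
    | succ n ih =>
      have h1 : 2 * (n + 1) + 1 = (2 * n + 1) + 2 := by ring
      rw [h1, pow_add, ih, smul_mul_assoc, h3, smul_smul, ← pow_succ]
  have heven_pow : ∀ k : ℕ, S ^ (2 * k + 2) = ((-(t ^ 2)) ^ k) • S ^ 2 := by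
    intro k
    have h1 : 2 * k + 2 = (2 * k + 1) + 1 := by ring
    rw [h1, pow_succ, hodd_pow k, smul_mul_assoc, ← sq]
  -- scalar series for sin t / t
  have hsin : HasSum (fun k : ℕ => ((-1 : ℝ) ^ k * t ^ (2 * k + 1) / Nat.factorial (2 * k + 1)) / t)
      (Real.sin t / t) := (Real.hasSum_sin t).div_const t
  -- scalar series for (1 - cos t) / t ^ 2
  have hcos1 : HasSum (fun k : ℕ => (-1 : ℝ) ^ (k + 1) * t ^ (2 * (k + 1)) / Nat.factorial (2 * (k + 1)))
      (Real.cos t - 1) := by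
    apply (hasSum_nat_add_iff (f := fun n : ℕ => (-1 : ℝ) ^ n * t ^ (2 * n) / Nat.factorial (2 * n)) 1).mpr
    simpa using Real.hasSum_cos t
  have hcos : HasSum (fun k : ℕ => (-1 : ℝ) ^ k * t ^ (2 * k) / Nat.factorial (2 * k + 2))
      ((1 - Real.cos t) / t ^ 2) := by
    have h2 := (hcos1.neg).div_const (t ^ 2)
    have heq : (fun k : ℕ => -((-1 : ℝ) ^ (k + 1) * t ^ (2 * (k + 1)) / Nat.factorial (2 * (k + 1))) / t ^ 2)
        = fun k : ℕ => (-1 : ℝ) ^ k * t ^ (2 * k) / Nat.factorial (2 * k + 2) := by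
      funext k
      have hk : (2 * (k + 1)) = 2 * k + 2 := by ring
      have hfac : (Nat.factorial (2 * k + 2) : ℝ) ≠ 0 := Nat.cast_ne_zero.mpr (Nat.factorial_ne_zero _)
      rw [hk, pow_succ, pow_add]
      field_simp
    rw [heq] at h2
    convert h2 using 1
    · rfl
    ring
  -- the matrix series
  have hfodd : HasSum (fun k : ℕ => ((Nat.factorial (2 * k + 1) : ℝ))⁻¹ • S ^ (2 * k + 1))
      ((Real.sin t / t) • S) := by
    have h := hsin.smul_const S
    convert h using 1
    funext k
    rw [hodd_pow k, smul_smul]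
    congr 1
    have hfac : (Nat.factorial (2 * k + 1) : ℝ) ≠ 0 := Nat.cast_ne_zero.mpr (Nat.factorial_ne_zero _)
    have hneg : (-(t ^ 2) : ℝ) ^ k = (-1 : ℝ) ^ k * t ^ (2 * k) := by
      rw [neg_pow, pow_mul]
    rw [hneg, pow_succ]
    field_simp
  have hfeven' : HasSum (fun k : ℕ => ((Nat.factorial (2 * (k + 1)) : ℝ))⁻¹ • S ^ (2 * (k + 1)))
      (((1 - Real.cos t) / t ^ 2) • S ^ 2) := by
    have h := hcos.smul_const (S ^ 2)
    convert h using 1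
    funext k
    have hk : 2 * (k + 1) = 2 * k + 2 := by ring
    rw [hk, heven_pow k, smul_smul]
    congr 1
    have hfac : (Nat.factorial (2 * k + 2) : ℝ) ≠ 0 := Nat.cast_ne_zero.mpr (Nat.factorial_ne_zero _)
    have hneg : (-(t ^ 2) : ℝ) ^ k = (-1 : ℝ) ^ k * t ^ (2 * k) := by
      rw [neg_pow, pow_mul]
    rw [hneg]
    field_simp
  have hfeven : HasSum (fun k : ℕ => ((Nat.factorial (2 * k) : ℝ))⁻¹ • S ^ (2 * k))
      (((1 - Real.cos t) / t ^ 2) • S ^ 2 + 1) := by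
    have h := (hasSum_nat_add_iff
      (f := fun k : ℕ => ((Nat.factorial (2 * k) : ℝ))⁻¹ • S ^ (2 * k)) 1).mp hfeven'
    simpa using h
  have hfull : HasSum (fun n : ℕ => ((Nat.factorial n : ℝ))⁻¹ • S ^ n)
      ((((1 - Real.cos t) / t ^ 2) • S ^ 2 + 1) + (Real.sin t / t) • S) :=
    HasSum.even_add_odd hfeven hfodd
  simp only [NormedSpace.exp_eq_tsum (𝕂 := ℝ)]
  rw [hfull.tsum_eq]
  unfold rod
  rw [← hS, ← ht]
  abel
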